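/- Let k ≥ 2 and let F ⊆ 2^[n] be an (n−1)-trace k-Sperner family such that 4 ≤ |F| ≤ n − 1 for every F ∈ F. Let c⁻, c, c⁺ denote the numbers of maximal chains C of 2^[n] with |F ∩ C| < k − 1, = k − 1, and = k respectively. Then c⁻ ≥ c⁺. -/

import Mathlib

def IsKSperner {α : Type*} (k : ℕ) (G : Finset (Finset α)) : Prop :=
  ¬ ∃ c : Fin (k+1) → Finset α, (∀ i j : Fin (k+1), i < j → c i ⊂ c j) ∧ ∀ i, c i ∈ G

def maxChains (n : ℕ) : Finset (Finset (Finset (Fin n))) :=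
  Finset.univ.powerset.filter (fun C => C.card = n + 1 ∧ ∀ A ∈ C, ∀ B ∈ C, A ⊆ B ∨ B ⊆ A)

namespace S12

open Finset

lemma sperner_bound {α : Type*} [DecidableEq α] {k : ℕ} {G S : Finset (Finset α)}
    (hG : IsKSperner k G)
    (hcomp : ∀ A ∈ S, ∀ B ∈ S, A ⊆ B ∨ B ⊆ A)
    (hmem : ∀ A ∈ S, A ∈ G) : S.card ≤ k := by
  classical
  by_contra hlt
  push_neg at hlt
  obtain ⟨T, hTS, hT⟩ := Finset.exists_subset_card_eq (s := S) (n := k+1) (by omega)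
  have hinj : Set.InjOn (Finset.card : Finset α → ℕ) ↑T := by
    intro A hA B hB h
    rcases hcomp A (hTS hA) B (hTS hB) with hs | hs
    · exact Finset.eq_of_subset_of_card_le hs h.ge
    · exact (Finset.eq_of_subset_of_card_le hs h.le).symm
  have hKcard : (T.image Finset.card).card = k + 1 := by
    rw [Finset.card_image_of_injOn hinj, hT]
  let iso := (T.image Finset.card).orderIsoOfFin hKcard
  have hex : ∀ t : Fin (k+1), ∃! A, A ∈ T ∧ A.card = ((iso t : ℕ)) := by
    intro t
    have h2 : ((iso t : ℕ)) ∈ T.image Finset.card := (iso t).2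
    rw [Finset.mem_image] at h2
    obtain ⟨A, hA, hAc⟩ := h2
    exact ⟨A, ⟨hA, hAc⟩, fun B hB => hinj hB.1 hA (hB.2.trans hAc.symm)⟩
  let c : Fin (k+1) → Finset α := fun t => T.choose _ (hex t)
  have hcm : ∀ t, c t ∈ T := fun t => T.choose_mem _ (hex t)
  have hcc : ∀ t, (c t).card = (iso t : ℕ) := fun t => T.choose_property _ (hex t)
  apply hG
  refine ⟨c, ?_, fun t => hmem _ (hTS (hcm t))⟩
  intro t s hts
  have hlt2 : (c t).card < (c s).card := by
    rw [hcc, hcc]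
    exact iso.strictMono hts
  have hne : c t ≠ c s := fun h => by rw [h] at hlt2; omega
  rcases hcomp (c t) (hTS (hcm t)) (c s) (hTS (hcm s)) with hs | hs
  · exact hs.ssubset_of_ne hne
  · exact absurd (Finset.card_le_card hs) (by omega)

lemma chainBound {n k : ℕ} {F : Finset (Finset (Fin n))}
    (hF : ∀ x : Fin n, IsKSperner k (F.image (fun A => A.erase x)))
    (x : Fin n) (T : Finset ℕ) (f : ℕ → Finset (Fin n))
    (hmem : ∀ l ∈ T, ∃ A ∈ F, A.erase x = f l)
    (hcard : ∀ l ∈ T, (f l).card = l)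
    (hmono : ∀ l ∈ T, ∀ l' ∈ T, l ≤ l' → f l ⊆ f l') : T.card ≤ k := by
  classical
  have hinj : Set.InjOn f T := by
    intro l hl l' hl' h
    have h1 := hcard l hl
    have h2 := hcard l' hl'
    rw [h] at h1; omega
  have key := sperner_bound (hF x) (S := T.image f) ?_ ?_
  · rwa [Finset.card_image_of_injOn (by exact_mod_cast hinj)] at key
  · intro A hA B hB
    rw [Finset.mem_image] at hA hB
    obtain ⟨l, hl, rfl⟩ := hA
    obtain ⟨l', hl', rfl⟩ := hB
    rcases le_total l l' with h | h
    · exact Or.inl (hmono l hl l' hl' h)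
    · exact Or.inr (hmono l' hl' l hl h)
  · intro A hA
    rw [Finset.mem_image] at hA ⊢
    obtain ⟨l, hl, rfl⟩ := hA
    obtain ⟨B, hB, hBe⟩ := hmem l hl
    exact ⟨B, hB, hBe⟩


variable {n : ℕ}

def lev (C : Finset (Finset (Fin n))) (j : ℕ) : Finset (Fin n) :=
  (C.filter (fun A => A.card = j)).sup id

structure Graded (n : ℕ) (g : ℕ → Finset (Fin n)) : Prop where
  hcard : ∀ j, j ≤ n → (g j).card = j
  hmono : ∀ j l, j ≤ l → l ≤ n → g j ⊆ g l

lemma Graded.inj {g : ℕ → Finset (Fin n)} (hg : Graded n g) {j l : ℕ}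
    (hj : j ≤ n) (hl : l ≤ n) (h : g j = g l) : j = l := by
  have h1 := hg.hcard j hj
  have h2 := hg.hcard l hl
  rw [h] at h1; omega

lemma graded_image_mem {g : ℕ → Finset (Fin n)} (hg : Graded n g) :
    (Finset.range (n+1)).image g ∈ maxChains n := by
  classical
  rw [maxChains, Finset.mem_filter]
  refine ⟨Finset.mem_powerset.mpr (Finset.subset_univ _), ?_, ?_⟩
  · rw [Finset.card_image_of_injOn, Finset.card_range]
    intro j hj l hl h
    simp only [Finset.coe_range, Set.mem_Iio] at hj hl
    exact hg.inj (by omega) (by omega) h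
  · intro A hA B hB
    rw [Finset.mem_image] at hA hB
    obtain ⟨j, hj, rfl⟩ := hA
    obtain ⟨l, hl, rfl⟩ := hB
    rw [Finset.mem_range] at hj hl
    rcases le_total j l with h | h
    · exact Or.inl (hg.hmono j l h (by omega))
    · exact Or.inr (hg.hmono l j h (by omega))

lemma lev_image {g : ℕ → Finset (Fin n)} (hg : Graded n g) {j : ℕ} (hj : j ≤ n) :
    lev ((Finset.range (n+1)).image g) j = g j := by
  classical
  have hf : ((Finset.range (n+1)).image g).filter (fun A => A.card = j) = {g j} := by
    ext B
    simp only [Finset.mem_filter, Finset.mem_singleton, Finset.mem_image, Finset.mem_range]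
    constructor
    · rintro ⟨⟨l, hl, rfl⟩, hBc⟩
      have := hg.hcard l (by omega)
      have : l = j := by omega
      subst this; rfl
    · rintro rfl
      exact ⟨⟨j, by omega, rfl⟩, hg.hcard j hj⟩
  rw [lev, hf, Finset.sup_singleton, id]

lemma maxChains_graded {C : Finset (Finset (Fin n))} (hC : C ∈ maxChains n) :
    Graded n (lev C) ∧ C = (Finset.range (n+1)).image (lev C) := by
  classical
  rw [maxChains, Finset.mem_filter] at hC
  obtain ⟨-, hcard, hcomp⟩ := hC
  have hinj : Set.InjOn (Finset.card : Finset (Fin n) → ℕ) ↑C := by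
    intro A hA B hB h
    rcases hcomp A hA B hB with hs | hs
    · exact Finset.eq_of_subset_of_card_le hs h.ge
    · exact (Finset.eq_of_subset_of_card_le hs h.le).symm
  have himg : C.image Finset.card = Finset.range (n+1) := by
    apply Finset.eq_of_subset_of_card_le
    · intro j hj
      rw [Finset.mem_image] at hj
      obtain ⟨A, hA, rfl⟩ := hj
      rw [Finset.mem_range]
      have := Finset.card_le_univ A
      simp only [Finset.card_univ, Fintype.card_fin] at this
      omega
    · rw [Finset.card_range, Finset.card_image_of_injOn hinj, hcard]
  have hex : ∀ j : ℕ, j ≤ n → ∃ A ∈ C, A.card = j := by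
    intro j hj
    have : j ∈ C.image Finset.card := by rw [himg, Finset.mem_range]; omega
    rw [Finset.mem_image] at this
    obtain ⟨A, hA, hAc⟩ := this
    exact ⟨A, hA, hAc⟩
  have hlev : ∀ j : ℕ, j ≤ n → lev C j ∈ C ∧ (lev C j).card = j := by
    intro j hj
    obtain ⟨A, hA, hAc⟩ := hex j hj
    have hf : C.filter (fun B => B.card = j) = {A} := by
      ext B
      simp only [Finset.mem_filter, Finset.mem_singleton]
      constructor
      · rintro ⟨hB, hBc⟩
        exact hinj hB hA (hBc.trans hAc.symm)
      · rintro rfl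
        exact ⟨hA, hAc⟩
    rw [lev, hf, Finset.sup_singleton, id]
    exact ⟨hA, hAc⟩
  constructor
  · constructor
    · exact fun j hj => (hlev j hj).2
    · intro j l hjl hl
      have h1 := hlev j (by omega)
      have h2 := hlev l hl
      rcases hcomp _ h1.1 _ h2.1 with hs | hs
      · exact hs
      · have := Finset.card_le_card hs
        rw [h1.2, h2.2] at this
        have : l = j := by omega
        rw [this]
  · ext A
    simp only [Finset.mem_image, Finset.mem_range]
    constructor
    · intro hA
      have hc : A.card ≤ n := by
        have := Finset.card_le_univ A
        simp only [Finset.card_univ, Fintype.card_fin] at this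
        exact this
      refine ⟨A.card, by omega, ?_⟩
      have h1 := hlev A.card hc
      exact hinj h1.1 hA h1.2
    · rintro ⟨j, hj, rfl⟩
      exact (hlev j (by omega)).1


open scoped Classical

variable (F : Finset (Finset (Fin n)))

noncomputable def hitSet (C : Finset (Finset (Fin n))) : Finset ℕ :=
  (Finset.range (n+1)).filter (fun j => lev C j ∈ F)

noncomputable def iL (C : Finset (Finset (Fin n))) : ℕ :=
  if h : (hitSet F C).Nonempty then (hitSet F C).min' h else 0

noncomputable def mL (C : Finset (Finset (Fin n))) : ℕ :=
  if h : (hitSet F C).Nonempty then (hitSet F C).max' h else 0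

noncomputable def Ad (C : Finset (Finset (Fin n))) : Finset (Fin n) :=
  lev C (iL F C) \ lev C (iL F C - 1)

noncomputable def Yd (C : Finset (Finset (Fin n))) : Finset (Fin n) :=
  lev C (mL F C + 1) \ lev C (mL F C)

noncomputable def gA (C : Finset (Finset (Fin n))) : ℕ → Finset (Fin n) := fun j =>
  if j < iL F C then lev C j
  else if j ≤ n-1 then lev C (j+1) \ Ad F C
  else Finset.univ

noncomputable def gR (C : Finset (Finset (Fin n))) : ℕ → Finset (Fin n) := fun j =>
  if j = 0 then ∅
  else if j ≤ iL F C then lev C (j-1) ∪ Yd F C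
  else if j ≤ mL F C then (lev C j \ Ad F C) ∪ Yd F C
  else if j ≤ n-1 then lev C (j+1) \ Ad F C
  else Finset.univ

def caseQ (C : Finset (Finset (Fin n))) : Prop :=
  ∀ l ∈ hitSet F C, l ≠ iL F C → lev C l \ Ad F C ∈ F

noncomputable def Phi (C : Finset (Finset (Fin n))) : Finset (Finset (Fin n)) :=
  if caseQ F C then (Finset.range (n+1)).image (gR F C)
  else (Finset.range (n+1)).image (gA F C)

structure Setup (k : ℕ) (C : Finset (Finset (Fin n))) : Prop where
  grad : Graded n (lev C)
  ceq : C = (Finset.range (n+1)).image (lev C)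
  hk2 : 2 ≤ k
  hcardH : (hitSet F C).card = k
  himem : iL F C ∈ hitSet F C
  hmmem : mL F C ∈ hitSet F C
  hiLe : ∀ l ∈ hitSet F C, iL F C ≤ l
  hmGe : ∀ l ∈ hitSet F C, l ≤ mL F C
  hi4 : 4 ≤ iL F C
  him : iL F C < mL F C
  hmn : mL F C + 1 ≤ n

namespace Setup

variable {F} {k : ℕ} {C : Finset (Finset (Fin n))} (s : Setup F k C)

lemma hit_le {l : ℕ} (hl : l ∈ hitSet F C) : l ≤ n := by
  have := (Finset.mem_filter.mp hl).1
  rw [Finset.mem_range] at this; omega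

lemma hit_F {l : ℕ} (hl : l ∈ hitSet F C) : lev C l ∈ F :=
  (Finset.mem_filter.mp hl).2

lemma mem_hit {l : ℕ} (hl : l ≤ n) (hlF : lev C l ∈ F) : l ∈ hitSet F C :=
  Finset.mem_filter.mpr ⟨Finset.mem_range.mpr (by omega), hlF⟩

include s

lemma hn6 : 6 ≤ n := by
  have h1 := s.hi4
  have h2 := s.him
  have h3 := s.hmn
  omega

lemma a_spec : ∃ a : Fin n, Ad F C = {a} ∧ (∀ l, l ≤ n → (a ∈ lev C l ↔ iL F C ≤ l)) := by
  have hin : iL F C ≤ n := hit_le s.himem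
  have hsub : lev C (iL F C - 1) ⊆ lev C (iL F C) := s.grad.hmono _ _ (by omega) hin
  have hcard : (Ad F C).card = 1 := by
    rw [Ad, Finset.card_sdiff_of_subset hsub, s.grad.hcard _ hin, s.grad.hcard _ (by omega)]
    have := s.hi4; omega
  obtain ⟨a, ha⟩ := Finset.card_eq_one.mp hcard
  refine ⟨a, ha, ?_⟩
  have hai : a ∈ lev C (iL F C) ∧ a ∉ lev C (iL F C - 1) := by
    have : a ∈ Ad F C := by rw [ha]; exact Finset.mem_singleton_self a
    rw [Ad, Finset.mem_sdiff] at this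
    exact this
  intro l hl
  constructor
  · intro hal
    by_contra hcon
    exact hai.2 (s.grad.hmono l (iL F C - 1) (by omega) (by omega) hal)
  · intro hil
    exact s.grad.hmono (iL F C) l hil hl hai.1

lemma y_spec : ∃ y : Fin n, Yd F C = {y} ∧ (∀ l, l ≤ n → (y ∈ lev C l ↔ mL F C + 1 ≤ l)) := by
  have hmn : mL F C + 1 ≤ n := s.hmn
  have hsub : lev C (mL F C) ⊆ lev C (mL F C + 1) := s.grad.hmono _ _ (by omega) hmn
  have hcard : (Yd F C).card = 1 := by
    rw [Yd, Finset.card_sdiff_of_subset hsub, s.grad.hcard _ hmn, s.grad.hcard _ (by omega)]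
    omega
  obtain ⟨y, hy⟩ := Finset.card_eq_one.mp hcard
  refine ⟨y, hy, ?_⟩
  have hai : y ∈ lev C (mL F C + 1) ∧ y ∉ lev C (mL F C) := by
    have : y ∈ Yd F C := by rw [hy]; exact Finset.mem_singleton_self y
    rw [Yd, Finset.mem_sdiff] at this
    exact this
  intro l hl
  constructor
  · intro hal
    by_contra hcon
    exact hai.2 (s.grad.hmono l (mL F C) (by omega) (by omega) hal)
  · intro hil
    exact s.grad.hmono (mL F C + 1) l hil hl hai.1

lemma lev_pred : lev C (iL F C - 1) = lev C (iL F C) \ Ad F C := by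
  obtain ⟨a, ha, hmem⟩ := s.a_spec
  have hin : iL F C ≤ n := hit_le s.himem
  have hi4 := s.hi4
  rw [ha]
  apply Finset.eq_of_subset_of_card_le
  · intro x hx
    rw [Finset.mem_sdiff, Finset.mem_singleton]
    refine ⟨s.grad.hmono _ _ (by omega) hin hx, ?_⟩
    rintro rfl
    have := (hmem _ (by omega)).mp hx
    omega
  · have hsub : {a} ⊆ lev C (iL F C) := by
      rw [Finset.singleton_subset_iff]
      exact (hmem _ hin).mpr le_rfl
    rw [Finset.card_sdiff_of_subset hsub, s.grad.hcard _ hin, s.grad.hcard _ (by omega),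
      Finset.card_singleton]

lemma lev_succ : lev C (mL F C + 1) = lev C (mL F C) ∪ Yd F C := by
  have hsub : lev C (mL F C) ⊆ lev C (mL F C + 1) := s.grad.hmono _ _ (by omega) s.hmn
  rw [Yd]
  exact (Finset.union_sdiff_of_subset hsub).symm

end Setup

lemma card_inter_eq {C : Finset (Finset (Fin n))} (hC : C ∈ maxChains n) :
    (F ∩ C).card = (hitSet F C).card := by
  obtain ⟨grad, ceq⟩ := maxChains_graded hC
  have hciff := Finset.ext_iff.mp ceq
  have himg : F ∩ C = (hitSet F C).image (lev C) := by
    ext A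
    simp only [Finset.mem_inter, Finset.mem_image]
    constructor
    · rintro ⟨hAF, hAC⟩
      rw [hciff, Finset.mem_image] at hAC
      obtain ⟨j, hj, rfl⟩ := hAC
      rw [Finset.mem_range] at hj
      exact ⟨j, Finset.mem_filter.mpr ⟨Finset.mem_range.mpr hj, hAF⟩, rfl⟩
    · rintro ⟨j, hj, rfl⟩
      refine ⟨(Finset.mem_filter.mp hj).2, ?_⟩
      rw [hciff, Finset.mem_image]
      exact ⟨j, (Finset.mem_filter.mp hj).1, rfl⟩
  rw [himg]
  apply Finset.card_image_of_injOn
  intro j hj l hl h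
  have hj' := Setup.hit_le (Finset.mem_coe.mp hj)
  have hl' := Setup.hit_le (Finset.mem_coe.mp hl)
  exact grad.inj hj' hl' h

lemma setup_of {k : ℕ} {C : Finset (Finset (Fin n))} (hk : 2 ≤ k)
    (hsize : ∀ A ∈ F, 4 ≤ A.card ∧ A.card ≤ n - 1)
    (hC : C ∈ maxChains n) (hkC : (F ∩ C).card = k) : Setup F k C := by
  obtain ⟨grad, ceq⟩ := maxChains_graded hC
  have hcardH : (hitSet F C).card = k := by rw [← card_inter_eq F hC, hkC]
  have hne : (hitSet F C).Nonempty := Finset.card_pos.mp (by omega)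
  have hiL : iL F C = (hitSet F C).min' hne := by rw [iL, dif_pos hne]
  have hmL : mL F C = (hitSet F C).max' hne := by rw [mL, dif_pos hne]
  have himem : iL F C ∈ hitSet F C := by rw [hiL]; exact Finset.min'_mem _ _
  have hmmem : mL F C ∈ hitSet F C := by rw [hmL]; exact Finset.max'_mem _ _
  have hin : iL F C ≤ n := by
    have := (Finset.mem_filter.mp himem).1
    rw [Finset.mem_range] at this; omega
  have hmn' : mL F C ≤ n := by
    have := (Finset.mem_filter.mp hmmem).1
    rw [Finset.mem_range] at this; omega
  have hi4 : 4 ≤ iL F C := by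
    have hF := (Finset.mem_filter.mp himem).2
    have := (hsize _ hF).1
    rw [grad.hcard _ hin] at this
    exact this
  have hmn : mL F C + 1 ≤ n := by
    have hF := (Finset.mem_filter.mp hmmem).2
    have := (hsize _ hF).2
    rw [grad.hcard _ hmn'] at this
    omega
  refine ⟨grad, ceq, hk, hcardH, himem, hmmem, ?_, ?_, hi4, ?_, hmn⟩
  · intro l hl; rw [hiL]; exact Finset.min'_le _ _ hl
  · intro l hl; rw [hmL]; exact Finset.le_max' _ _ hl
  · rw [hiL, hmL]; exact Finset.min'_lt_max'_of_card _ (by omega)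

lemma setup_extra {F : Finset (Finset (Fin n))} {k : ℕ} {C : Finset (Finset (Fin n))}
    (s : Setup F k C) :
    ∃ a y : Fin n, Ad F C = {a} ∧ Yd F C = {y} ∧
      (∀ l, l ≤ n → (a ∈ lev C l ↔ iL F C ≤ l)) ∧
      (∀ l, l ≤ n → (y ∈ lev C l ↔ mL F C + 1 ≤ l)) ∧ a ≠ y := by
  obtain ⟨a, ha, han⟩ := s.a_spec
  obtain ⟨y, hy, hyn⟩ := s.y_spec
  have hmn' : mL F C ≤ n := by have := s.hmn; omega
  refine ⟨a, y, ha, hy, han, hyn, ?_⟩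
  intro h
  have h1 := (han (mL F C) hmn').mpr (by have := s.him; omega)
  have h2 := (hyn (mL F C) hmn').mp (h ▸ h1)
  omega

lemma gradA {F : Finset (Finset (Fin n))} {k : ℕ} {C : Finset (Finset (Fin n))}
    (s : Setup F k C) : Graded n (gA F C) := by
  obtain ⟨a, y, ha, hy, han, hyn, hay⟩ := setup_extra s
  have hi4 := s.hi4
  have hin : iL F C ≤ n := Setup.hit_le s.himem
  have hn6 := s.hn6
  constructor
  · intro j hj
    rw [gA]
    split_ifs with h1 h2
    · exact s.grad.hcard j hj
    · rw [ha]
      have hsub : {a} ⊆ lev C (j+1) :=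
        Finset.singleton_subset_iff.mpr ((han _ (by omega)).mpr (by omega))
      rw [Finset.card_sdiff_of_subset hsub, s.grad.hcard _ (by omega), Finset.card_singleton]
      omega
    · have hjn : j = n := by omega
      rw [hjn, Finset.card_univ, Fintype.card_fin]
  · intro j l hjl hl
    rw [gA, gA, ha]
    split_ifs with h1 h2 h3 h4 h5 h6
    · exact s.grad.hmono j l hjl (by omega)
    · refine Finset.subset_sdiff.mpr ⟨s.grad.hmono j (l+1) (by omega) (by omega), ?_⟩
      rw [Finset.disjoint_singleton_right]
      intro hmem
      have := (han j (by omega)).mp hmem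
      omega
    · exact Finset.subset_univ _
    · omega
    · exact Finset.sdiff_subset_sdiff (s.grad.hmono (j+1) (l+1) (by omega) (by omega))
        Finset.Subset.rfl
    · exact Finset.subset_univ _
    · omega
    · omega
    · exact Finset.subset_univ _

lemma gradR {F : Finset (Finset (Fin n))} {k : ℕ} {C : Finset (Finset (Fin n))}
    (s : Setup F k C) : Graded n (gR F C) := by
  obtain ⟨a, y, ha, hy, han, hyn, hay⟩ := setup_extra s
  have hi4 := s.hi4
  have him := s.him
  have hmn := s.hmn
  have hin : iL F C ≤ n := Setup.hit_le s.himem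
  have hn6 := s.hn6
  have hysub : ∀ l, l ≤ n → mL F C + 1 ≤ l → {y} ⊆ lev C l := by
    intro l h1 h2
    exact Finset.singleton_subset_iff.mpr ((hyn _ h1).mpr h2)
  have hynot : ∀ l, l ≤ n → l ≤ mL F C → y ∉ lev C l := by
    intro l h1 h2 hmem
    have := (hyn _ h1).mp hmem
    omega
  have hanot : ∀ l, l ≤ n → l < iL F C → a ∉ lev C l := by
    intro l h1 h2 hmem
    have := (han _ h1).mp hmem
    omega
  constructor
  · intro j hj
    rw [gR, ha, hy]
    split_ifs with h0 h1 h2 h3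
    · simp [h0]
    · rw [Finset.card_union_of_disjoint (Finset.disjoint_singleton_right.mpr
        (hynot _ (by omega) (by omega))), s.grad.hcard _ (by omega), Finset.card_singleton]
      omega
    · have haj : {a} ⊆ lev C j :=
        Finset.singleton_subset_iff.mpr ((han _ (by omega)).mpr (by omega))
      have hyj : y ∉ lev C j \ {a} := fun hmem =>
        hynot _ (by omega) (by omega) (Finset.mem_sdiff.mp hmem).1
      rw [Finset.card_union_of_disjoint (Finset.disjoint_singleton_right.mpr hyj),
        Finset.card_sdiff_of_subset haj, s.grad.hcard _ (by omega), Finset.card_singleton,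
        Finset.card_singleton]
      omega
    · have haj : {a} ⊆ lev C (j+1) :=
        Finset.singleton_subset_iff.mpr ((han _ (by omega)).mpr (by omega))
      rw [Finset.card_sdiff_of_subset haj, s.grad.hcard _ (by omega), Finset.card_singleton]
      omega
    · have hjn : j = n := by omega
      rw [hjn, Finset.card_univ, Fintype.card_fin]
  · intro j l hjl hl
    rw [gR, gR, ha, hy]
    split_ifs with h0 h1 h2 h3 h4 h5 h6 h7 h8 h9 h10 h11 h12 h13 h14 h15 h16 h17 h18
    all_goals try (exact Finset.empty_subset _)
    all_goals try (exact Finset.subset_univ _)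
    all_goals try (omega)
    -- remaining real cases
    all_goals try (exact Finset.union_subset_union
                    (s.grad.hmono _ _ (by omega) (by omega)) Finset.Subset.rfl)
    all_goals try (exact Finset.union_subset_union
                    (Finset.subset_sdiff.mpr ⟨s.grad.hmono _ _ (by omega) (by omega),
                      Finset.disjoint_singleton_right.mpr (hanot _ (by omega) (by omega))⟩)
                    Finset.Subset.rfl)
    all_goals try (exact Finset.union_subset_union
                    (Finset.sdiff_subset_sdiff (s.grad.hmono _ _ (by omega) (by omega))
                      Finset.Subset.rfl) Finset.Subset.rfl)
    all_goals try (exact Finset.union_subset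
                    (Finset.subset_sdiff.mpr ⟨s.grad.hmono _ _ (by omega) (by omega),
                      Finset.disjoint_singleton_right.mpr (hanot _ (by omega) (by omega))⟩)
                    (Finset.subset_sdiff.mpr ⟨hysub _ (by omega) (by omega),
                      Finset.disjoint_singleton_right.mpr
                        (fun hmem => hay (Finset.mem_singleton.mp hmem))⟩))
    all_goals try (exact Finset.union_subset
                    (Finset.sdiff_subset_sdiff (s.grad.hmono _ _ (by omega) (by omega))
                      Finset.Subset.rfl)
                    (Finset.subset_sdiff.mpr ⟨hysub _ (by omega) (by omega),
                      Finset.disjoint_singleton_right.mpr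
                        (fun hmem => hay (Finset.mem_singleton.mp hmem))⟩))
    all_goals exact Finset.sdiff_subset_sdiff
                    (s.grad.hmono _ _ (by omega) (by omega)) Finset.Subset.rfl

lemma erase_union_singleton {y : Fin n} {A : Finset (Fin n)} (h : y ∉ A) :
    (A ∪ {y}).erase y = A := by
  rw [Finset.erase_eq, Finset.union_sdiff_right]
  exact Finset.sdiff_eq_self_of_disjoint (Finset.disjoint_singleton_right.mpr h)

lemma erase_of_sdiff {x : Fin n} {A : Finset (Fin n)} :
    (A \ {x}).erase x = A \ {x} :=
  Finset.erase_eq_of_notMem (fun hmem => (Finset.mem_sdiff.mp hmem).2 (Finset.mem_singleton_self x))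

lemma excl_top {k : ℕ} {F : Finset (Finset (Fin n))} {C : Finset (Finset (Fin n))}
    (hF : ∀ x : Fin n, IsKSperner k (F.image (fun A => A.erase x)))
    (s : Setup F k C) :
    ∀ l', iL F C < l' → l' ≤ n → l' ∉ hitSet F C → lev C l' \ Ad F C ∉ F := by
  classical
  obtain ⟨a, y, ha, hy, han, hyn, hay⟩ := setup_extra s
  have hi4 := s.hi4
  have hcH := s.hcardH
  intro l' hl1 hl2 hl3 hGF
  rw [ha] at hGF
  have hmemT : ∀ c ∈ insert (l'-1) ((hitSet F C).image (fun l => l - 1)),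
      c + 1 ≤ n ∧ iL F C ≤ c + 1 := by
    intro c hc
    rcases Finset.mem_insert.mp hc with rfl | hc'
    · omega
    · rw [Finset.mem_image] at hc'
      obtain ⟨u, hu, rfl⟩ := hc'
      have h1 := s.hiLe _ hu
      have h2 := Setup.hit_le hu
      omega
  have hbound := chainBound hF a (insert (l'-1) ((hitSet F C).image (fun l => l - 1)))
    (fun c => lev C (c+1) \ {a})
    (by
      intro c hc
      rcases Finset.mem_insert.mp hc with rfl | hc'
      · refine ⟨lev C l' \ {a}, hGF, ?_⟩
        show (lev C l' \ {a}).erase a = lev C (l' - 1 + 1) \ {a}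
        have hl' : l' - 1 + 1 = l' := by omega
        rw [erase_of_sdiff, hl']
      · rw [Finset.mem_image] at hc'
        obtain ⟨u, hu, rfl⟩ := hc'
        refine ⟨lev C u, Setup.hit_F hu, ?_⟩
        show (lev C u).erase a = lev C (u - 1 + 1) \ {a}
        have h1 := s.hiLe _ hu
        have hu1 : u - 1 + 1 = u := by omega
        rw [Finset.erase_eq, hu1])
    (by
      intro c hc
      obtain ⟨h1, h2⟩ := hmemT c hc
      rw [Finset.card_sdiff_of_subset (Finset.singleton_subset_iff.mpr ((han _ h1).mpr h2)),
        s.grad.hcard _ h1, Finset.card_singleton]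
      omega)
    (by
      intro u hu v hv huv
      exact Finset.sdiff_subset_sdiff (s.grad.hmono _ _ (by omega) (hmemT v hv).1)
        Finset.Subset.rfl)
  have hnm : l' - 1 ∉ (hitSet F C).image (fun l => l - 1) := by
    intro hmem
    rw [Finset.mem_image] at hmem
    obtain ⟨u, hu, huv⟩ := hmem
    have h1 := s.hiLe _ hu
    have : u = l' := by omega
    exact hl3 (this ▸ hu)
  have hinj : Set.InjOn (fun l => l - 1) ↑(hitSet F C) := by
    intro u hu v hv huv
    have h1 := s.hiLe _ (Finset.mem_coe.mp hu)
    have h2 := s.hiLe _ (Finset.mem_coe.mp hv)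
    simp only at huv
    omega
  rw [Finset.card_insert_of_notMem hnm, Finset.card_image_of_injOn hinj, hcH] at hbound
  omega

lemma hitA {k : ℕ} {F : Finset (Finset (Fin n))} {C : Finset (Finset (Fin n))}
    (hF : ∀ x : Fin n, IsKSperner k (F.image (fun A => A.erase x)))
    (hsize : ∀ A ∈ F, 4 ≤ A.card ∧ A.card ≤ n - 1)
    (s : Setup F k C) (hQ : ¬ caseQ F C) :
    ((Finset.range (n+1)).filter (fun j => gA F C j ∈ F)).card ≤ k - 2 := by
  classical
  obtain ⟨a, y, ha, hy, han, hyn, hay⟩ := setup_extra s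
  have hi4 := s.hi4
  have him := s.him
  have hmn := s.hmn
  have hk2 := s.hk2
  have hcH := s.hcardH
  rw [caseQ] at hQ
  push_neg at hQ
  obtain ⟨l₀, hl₀H, hl₀ne, hl₀F⟩ := hQ
  have hsub : (Finset.range (n+1)).filter (fun j => gA F C j ∈ F) ⊆
      (((hitSet F C).erase (iL F C)).erase l₀).image (fun l => l - 1) := by
    intro j hj
    rw [Finset.mem_filter, Finset.mem_range] at hj
    obtain ⟨hj1, hj2⟩ := hj
    rw [gA] at hj2
    split_ifs at hj2 with h1 h2
    · have := s.hiLe j (Setup.mem_hit (by omega) hj2)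
      omega
    · have hj3 : j + 1 ∈ hitSet F C := by
        by_contra hcon
        exact excl_top hF s (j+1) (by omega) (by omega) hcon hj2
      have hne2 : j + 1 ≠ l₀ := by
        rintro rfl
        exact hl₀F hj2
      rw [Finset.mem_image]
      exact ⟨j+1, Finset.mem_erase.mpr ⟨hne2, Finset.mem_erase.mpr ⟨by omega, hj3⟩⟩, by omega⟩
    · have := (hsize _ hj2).2
      rw [Finset.card_univ, Fintype.card_fin] at this
      omega
  have h1 := Finset.card_le_card hsub
  have h2 := Finset.card_image_le (s := ((hitSet F C).erase (iL F C)).erase l₀)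
    (f := fun l => l - 1)
  have h3 : (((hitSet F C).erase (iL F C)).erase l₀).card = k - 2 := by
    rw [Finset.card_erase_of_mem (Finset.mem_erase.mpr ⟨hl₀ne, hl₀H⟩),
      Finset.card_erase_of_mem s.himem, hcH]
    omega
  omega

lemma hitR {k : ℕ} {F : Finset (Finset (Fin n))} {C : Finset (Finset (Fin n))}
    (hF : ∀ x : Fin n, IsKSperner k (F.image (fun A => A.erase x)))
    (hsize : ∀ A ∈ F, 4 ≤ A.card ∧ A.card ≤ n - 1)
    (s : Setup F k C) (hQ : caseQ F C) :
    ((Finset.range (n+1)).filter (fun j => gR F C j ∈ F)).card ≤ k - 2 := by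
  classical
  obtain ⟨a, y, ha, hy, han, hyn, hay⟩ := setup_extra s
  have hi4 := s.hi4
  have him := s.him
  have hmn := s.hmn
  have hk2 := s.hk2
  have hcH := s.hcardH
  have hynot : ∀ l, l ≤ n → l ≤ mL F C → y ∉ lev C l := by
    intro l h1 h2 hmem
    have := (hyn _ h1).mp hmem
    omega
  -- R1 : no hits at low levels
  have hR1 : ∀ j, 1 ≤ j → j ≤ iL F C → lev C (j-1) ∪ {y} ∉ F := by
    intro j hj1 hj2 hGF
    have hTle : ∀ c ∈ insert (j-1) (hitSet F C), c ≤ n := by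
      intro c hc
      rcases Finset.mem_insert.mp hc with rfl | hc'
      · omega
      · exact Setup.hit_le hc'
    have hbound := chainBound hF y (insert (j-1) (hitSet F C)) (fun c => lev C c)
      (by
        intro c hc
        rcases Finset.mem_insert.mp hc with rfl | hc'
        · exact ⟨lev C (j-1) ∪ {y}, hGF,
            erase_union_singleton (hynot _ (by omega) (by omega))⟩
        · exact ⟨lev C c, Setup.hit_F hc',
            Finset.erase_eq_of_notMem (hynot _ (Setup.hit_le hc') (s.hmGe _ hc'))⟩)
      (by
        intro c hc
        exact s.grad.hcard _ (hTle c hc))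
      (by
        intro u hu v hv huv
        exact s.grad.hmono _ _ huv (hTle v hv))
    have hnm : j - 1 ∉ hitSet F C := by
      intro hmem
      have := s.hiLe _ hmem
      omega
    rw [Finset.card_insert_of_notMem hnm, hcH] at hbound
    omega
  -- R2b : D_m not in F
  have hR2b : (lev C (mL F C) \ {a}) ∪ {y} ∉ F := by
    intro hGF
    let f : ℕ → Finset (Fin n) := fun c =>
      if c < mL F C then lev C (c+1) \ {a} else (lev C (mL F C) \ {a}) ∪ {y}
    have hfm : f (mL F C) = (lev C (mL F C) \ {a}) ∪ {y} := if_neg (lt_irrefl _)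
    have hfl : ∀ c, c < mL F C → f c = lev C (c+1) \ {a} := fun c hc => if_pos hc
    have hTfact : ∀ c ∈ insert (mL F C) ((hitSet F C).image (fun l => l - 1)),
        c ≤ mL F C ∧ iL F C ≤ c + 1 ∧ c + 1 ≤ n := by
      intro c hc
      rcases Finset.mem_insert.mp hc with rfl | hc'
      · omega
      · rw [Finset.mem_image] at hc'
        obtain ⟨u, hu, rfl⟩ := hc'
        have h1 := s.hiLe _ hu
        have h2 := s.hmGe _ hu
        have h3 := Setup.hit_le hu
        omega
    have hanotG : a ∉ (lev C (mL F C) \ {a}) ∪ {y} := by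
      intro hmem
      rcases Finset.mem_union.mp hmem with h | h
      · exact (Finset.mem_sdiff.mp h).2 (Finset.mem_singleton_self a)
      · exact hay (Finset.mem_singleton.mp h)
    have hbound := chainBound hF a (insert (mL F C) ((hitSet F C).image (fun l => l - 1))) f
      (by
        intro c hc
        rcases Finset.mem_insert.mp hc with rfl | hc'
        · rw [hfm]
          exact ⟨(lev C (mL F C) \ {a}) ∪ {y}, hGF, Finset.erase_eq_of_notMem hanotG⟩
        · rw [Finset.mem_image] at hc'
          obtain ⟨u, hu, rfl⟩ := hc'
          have h1 := s.hiLe _ hu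
          have h2 := s.hmGe _ hu
          rw [hfl _ (by omega)]
          refine ⟨lev C u, Setup.hit_F hu, ?_⟩
          have hu1 : u - 1 + 1 = u := by omega
          rw [Finset.erase_eq, hu1])
      (by
        intro c hc
        obtain ⟨h1, h2, h3⟩ := hTfact c hc
        rcases Nat.lt_or_ge c (mL F C) with h | h
        · rw [hfl _ h, Finset.card_sdiff_of_subset (Finset.singleton_subset_iff.mpr
            ((han _ h3).mpr h2)), s.grad.hcard _ h3, Finset.card_singleton]
          omega
        · have hcm : c = mL F C := by omega
          subst hcm
          rw [hfm, Finset.card_union_of_disjoint (Finset.disjoint_singleton_right.mpr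
            (fun hmem => hynot _ (by omega) (by omega) (Finset.mem_sdiff.mp hmem).1)),
            Finset.card_sdiff_of_subset (Finset.singleton_subset_iff.mpr ((han _ (by omega)).mpr
              (by omega))), s.grad.hcard _ (by omega), Finset.card_singleton,
            Finset.card_singleton]
          omega)
      (by
        intro u hu v hv huv
        obtain ⟨hu1, hu2, hu3⟩ := hTfact u hu
        obtain ⟨hv1, hv2, hv3⟩ := hTfact v hv
        rcases Nat.lt_or_ge v (mL F C) with h | h
        · have hu' : u < mL F C := by omega
          rw [hfl _ hu', hfl _ h]
          exact Finset.sdiff_subset_sdiff (s.grad.hmono _ _ (by omega) (by omega))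
            Finset.Subset.rfl
        · have hvm : v = mL F C := by omega
          subst hvm
          rw [hfm]
          rcases Nat.lt_or_ge u (mL F C) with h' | h'
          · rw [hfl _ h']
            refine Finset.Subset.trans ?_ Finset.subset_union_left
            exact Finset.sdiff_subset_sdiff (s.grad.hmono _ _ (by omega) (by omega))
              Finset.Subset.rfl
          · have hum : u = mL F C := by omega
            subst hum
            rw [hfm])
    have hnm : mL F C ∉ (hitSet F C).image (fun l => l - 1) := by
      intro hmem
      rw [Finset.mem_image] at hmem
      obtain ⟨u, hu, huv⟩ := hmem
      have h1 := s.hiLe _ hu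
      have h2 := s.hmGe _ hu
      omega
    have hinj : Set.InjOn (fun l => l - 1) ↑(hitSet F C) := by
      intro u hu v hv huv
      have h1 := s.hiLe _ (Finset.mem_coe.mp hu)
      have h2 := s.hiLe _ (Finset.mem_coe.mp hv)
      simp only at huv
      omega
    rw [Finset.card_insert_of_notMem hnm, Finset.card_image_of_injOn hinj, hcH] at hbound
    omega
  -- R2a : middle hits must be at hit levels
  have hR2a : ∀ j, iL F C < j → j ≤ mL F C → ((lev C j \ {a}) ∪ {y}) ∈ F →
      j ∈ hitSet F C := by
    intro j hj1 hj2 hGF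
    by_contra hjH
    let f : ℕ → Finset (Fin n) := fun c =>
      if c < mL F C then lev C (c+1) \ {a} else lev C (mL F C)
    have hfm : f (mL F C) = lev C (mL F C) := if_neg (lt_irrefl _)
    have hfl : ∀ c, c < mL F C → f c = lev C (c+1) \ {a} := fun c hc => if_pos hc
    have hTfact : ∀ c ∈ insert (mL F C)
        ((insert j ((hitSet F C).erase (iL F C))).image (fun l => l - 1)),
        c ≤ mL F C ∧ iL F C ≤ c + 1 ∧ c + 1 ≤ n := by
      intro c hc
      rcases Finset.mem_insert.mp hc with rfl | hc'
      · omega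
      · rw [Finset.mem_image] at hc'
        obtain ⟨u, hu, rfl⟩ := hc'
        rcases Finset.mem_insert.mp hu with rfl | hu'
        · omega
        · rw [Finset.mem_erase] at hu'
          have h1 := s.hiLe _ hu'.2
          have h2 := s.hmGe _ hu'.2
          have h3 := Setup.hit_le hu'.2
          have h4 := hu'.1
          omega
    have hbound := chainBound hF y (insert (mL F C)
        ((insert j ((hitSet F C).erase (iL F C))).image (fun l => l - 1))) f
      (by
        intro c hc
        rcases Finset.mem_insert.mp hc with rfl | hc'
        · rw [hfm]
          exact ⟨lev C (mL F C), Setup.hit_F s.hmmem,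
            Finset.erase_eq_of_notMem (hynot _ (by omega) (by omega))⟩
        · rw [Finset.mem_image] at hc'
          obtain ⟨u, hu, rfl⟩ := hc'
          rcases Finset.mem_insert.mp hu with rfl | hu'
          · rw [hfl _ (by omega)]
            refine ⟨(lev C u \ {a}) ∪ {y}, hGF, ?_⟩
            have hu1 : u - 1 + 1 = u := by omega
            rw [erase_union_singleton (fun hmem =>
              hynot _ (by omega) (by omega) (Finset.mem_sdiff.mp hmem).1), hu1]
          · rw [Finset.mem_erase] at hu'
            have h1 := s.hiLe _ hu'.2
            have h2 := s.hmGe _ hu'.2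
            have h3 := Setup.hit_le hu'.2
            have hmemF : lev C u \ {a} ∈ F := by
              have := hQ u hu'.2 hu'.1
              rwa [ha] at this
            rw [hfl _ (by omega)]
            refine ⟨lev C u \ {a}, hmemF, ?_⟩
            have hu1 : u - 1 + 1 = u := by omega
            rw [Finset.erase_eq_of_notMem (fun hmem =>
              hynot _ (by omega) (by omega) (Finset.mem_sdiff.mp hmem).1), hu1])
      (by
        intro c hc
        obtain ⟨h1, h2, h3⟩ := hTfact c hc
        rcases Nat.lt_or_ge c (mL F C) with h | h
        · rw [hfl _ h, Finset.card_sdiff_of_subset (Finset.singleton_subset_iff.mpr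
            ((han _ h3).mpr h2)), s.grad.hcard _ h3, Finset.card_singleton]
          omega
        · have hcm : c = mL F C := by omega
          subst hcm
          rw [hfm]
          exact s.grad.hcard _ (by omega))
      (by
        intro u hu v hv huv
        obtain ⟨hu1, hu2, hu3⟩ := hTfact u hu
        obtain ⟨hv1, hv2, hv3⟩ := hTfact v hv
        rcases Nat.lt_or_ge v (mL F C) with h | h
        · have hu' : u < mL F C := by omega
          rw [hfl _ hu', hfl _ h]
          exact Finset.sdiff_subset_sdiff (s.grad.hmono _ _ (by omega) (by omega))
            Finset.Subset.rfl
        · have hvm : v = mL F C := by omega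
          subst hvm
          rw [hfm]
          rcases Nat.lt_or_ge u (mL F C) with h' | h'
          · rw [hfl _ h']
            exact Finset.Subset.trans Finset.sdiff_subset
              (s.grad.hmono _ _ (by omega) (by omega))
          · have hum : u = mL F C := by omega
            subst hum
            rw [hfm])
    have hnm : mL F C ∉ (insert j ((hitSet F C).erase (iL F C))).image (fun l => l - 1) := by
      intro hmem
      rw [Finset.mem_image] at hmem
      obtain ⟨u, hu, huv⟩ := hmem
      rcases Finset.mem_insert.mp hu with rfl | hu'
      · omega
      · rw [Finset.mem_erase] at hu'
        have h1 := s.hiLe _ hu'.2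
        have h2 := s.hmGe _ hu'.2
        have h4 := hu'.1
        omega
    have hinj : Set.InjOn (fun l => l - 1) ↑(insert j ((hitSet F C).erase (iL F C))) := by
      intro u hu v hv huv
      simp only [Finset.coe_insert, Set.mem_insert_iff, Finset.mem_coe,
        Finset.mem_erase] at hu hv
      simp only at huv
      have hu1 : iL F C < u := by
        rcases hu with rfl | hu'
        · omega
        · have := s.hiLe _ hu'.2
          have := hu'.1
          omega
      have hv1 : iL F C < v := by
        rcases hv with rfl | hv'
        · omega
        · have := s.hiLe _ hv'.2
          have := hv'.1
          omega
      omega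
    have hjni : j ∉ (hitSet F C).erase (iL F C) := fun hmem =>
      hjH (Finset.mem_erase.mp hmem).2
    rw [Finset.card_insert_of_notMem hnm, Finset.card_image_of_injOn hinj,
      Finset.card_insert_of_notMem hjni, Finset.card_erase_of_mem s.himem, hcH] at hbound
    omega
  -- main subset claim
  have hsub : (Finset.range (n+1)).filter (fun j => gR F C j ∈ F) ⊆
      ((hitSet F C).erase (iL F C)).erase (mL F C) := by
    intro j hj
    rw [Finset.mem_filter, Finset.mem_range] at hj
    obtain ⟨hj1, hj2⟩ := hj
    rw [gR] at hj2
    split_ifs at hj2 with h0 h1 h2 h3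
    · subst h0
      have := (hsize _ hj2).1
      rw [Finset.card_empty] at this
      omega
    · rw [hy] at hj2
      exact absurd hj2 (hR1 j (by omega) h1)
    · rw [ha, hy] at hj2
      have hjH := hR2a j (by omega) h2 hj2
      have hjm : j ≠ mL F C := by
        rintro rfl
        exact hR2b hj2
      exact Finset.mem_erase.mpr ⟨hjm, Finset.mem_erase.mpr ⟨by omega, hjH⟩⟩
    · have hjH : j + 1 ∉ hitSet F C := by
        intro hmem
        have := s.hmGe _ hmem
        omega
      exact absurd hj2 (excl_top hF s (j+1) (by omega) (by omega) hjH)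
    · have := (hsize _ hj2).2
      rw [Finset.card_univ, Fintype.card_fin] at this
      omega
  have h1 := Finset.card_le_card hsub
  have h3 : (((hitSet F C).erase (iL F C)).erase (mL F C)).card = k - 2 := by
    rw [Finset.card_erase_of_mem (Finset.mem_erase.mpr ⟨by omega, s.hmmem⟩),
      Finset.card_erase_of_mem s.himem, hcH]
    omega
  omega

lemma lev_top {k : ℕ} {F : Finset (Finset (Fin n))} {C : Finset (Finset (Fin n))}
    (s : Setup F k C) : lev C n = Finset.univ := by
  apply Finset.eq_univ_of_card
  rw [s.grad.hcard n le_rfl, Fintype.card_fin]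

lemma alpha_top {k : ℕ} {F : Finset (Finset (Fin n))} {C : Finset (Finset (Fin n))}
    (s : Setup F k C) : gA F C (n-1) = Finset.univ \ Ad F C := by
  have hn6 := s.hn6
  have him := s.him
  have hmn := s.hmn
  have hiLe := s.hmGe _ s.himem
  have h1 : n - 1 + 1 = n := by omega
  rw [gA, if_neg (by omega), if_pos (le_refl _), h1, lev_top s]

lemma rho_one {k : ℕ} {F : Finset (Finset (Fin n))} {C : Finset (Finset (Fin n))}
    (s : Setup F k C) : gR F C 1 = Yd F C := by
  have hi4 := s.hi4
  rw [gR, if_neg (by omega), if_pos (by omega)]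
  have h0 : lev C (1-1) = ∅ := Finset.card_eq_zero.mp (s.grad.hcard 0 (by omega))
  rw [h0, Finset.empty_union]

lemma rho_top {k : ℕ} {F : Finset (Finset (Fin n))} {C : Finset (Finset (Fin n))}
    (s : Setup F k C) : gR F C (n-1) = Finset.univ \ Ad F C := by
  have hn6 := s.hn6
  have him := s.him
  have hmn := s.hmn
  have hiLe := s.hmGe _ s.himem
  by_cases hm : mL F C = n - 1
  · rw [gR, if_neg (by omega), if_neg (by omega), if_pos (by omega)]
    have h1 : mL F C + 1 = n := by omega
    have hYd : Yd F C = Finset.univ \ lev C (mL F C) := by rw [Yd, h1, lev_top s]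
    have hsub : Ad F C ⊆ lev C (mL F C) := by
      rw [Ad]
      exact Finset.Subset.trans Finset.sdiff_subset
        (s.grad.hmono _ _ (by omega) (by omega))
    have hml : lev C (n-1) = lev C (mL F C) := by rw [hm]
    rw [hml, hYd]
    ext z
    simp only [Finset.mem_union, Finset.mem_sdiff, Finset.mem_univ, true_and]
    constructor
    · rintro (⟨h1', h2'⟩ | h1')
      · exact h2'
      · exact fun hz => h1' (hsub hz)
    · intro hz
      by_cases hzm : z ∈ lev C (mL F C)
      · exact Or.inl ⟨hzm, hz⟩
      · exact Or.inr hzm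
  · rw [gR, if_neg (by omega), if_neg (by omega), if_neg (by omega), if_pos (le_refl _)]
    have h1 : n - 1 + 1 = n := by omega
    rw [h1, lev_top s]

lemma alpha_key {k : ℕ} {F : Finset (Finset (Fin n))} {C : Finset (Finset (Fin n))}
    (s : Setup F k C) : ∀ l, iL F C ≤ l → l ≤ n →
      gA F C (l - 1) = lev C l \ Ad F C := by
  intro l h1 h2
  have hi4 := s.hi4
  have hmn := s.hmn
  rcases eq_or_lt_of_le h1 with heq | hlt
  · rw [← heq, gA, if_pos (by omega)]
    exact s.lev_pred
  · rw [gA, if_neg (by omega), if_pos (by omega)]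
    have h3 : l - 1 + 1 = l := by omega
    rw [h3]

lemma rho_key {k : ℕ} {F : Finset (Finset (Fin n))} {C : Finset (Finset (Fin n))}
    (s : Setup F k C) : ∀ l, iL F C ≤ l → l ≤ mL F C →
      gR F C l = (lev C l \ Ad F C) ∪ Yd F C := by
  intro l h1 h2
  have hi4 := s.hi4
  rcases eq_or_lt_of_le h1 with heq | hlt
  · rw [← heq, gR, if_neg (by omega), if_pos (le_refl _)]
    rw [s.lev_pred]
  · rw [gR, if_neg (by omega), if_neg (by omega), if_pos h2]

lemma sdiff_univ_eq {a b : Fin n} (h : Finset.univ \ {a} = Finset.univ \ ({b} : Finset (Fin n))) :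
    a = b := by
  by_contra hne
  have h1 : b ∈ Finset.univ \ ({a} : Finset (Fin n)) := by
    rw [Finset.mem_sdiff, Finset.mem_singleton]
    exact ⟨Finset.mem_univ _, fun hc => hne hc.symm⟩
  rw [h, Finset.mem_sdiff, Finset.mem_singleton] at h1
  exact h1.2 rfl

lemma injA_lt {k : ℕ} {F : Finset (Finset (Fin n))} {C₁ C₂ : Finset (Finset (Fin n))}
    (hF : ∀ x : Fin n, IsKSperner k (F.image (fun A => A.erase x)))
    (s₁ : Setup F k C₁) (s₂ : Setup F k C₂) {a : Fin n}
    (ha₁ : Ad F C₁ = {a}) (ha₂ : Ad F C₂ = {a})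
    (he : ∀ j, j ≤ n → gA F C₁ j = gA F C₂ j)
    (hlt : iL F C₁ < iL F C₂) : False := by
  classical
  have hi4 := s₁.hi4
  have hcH := s₂.hcardH
  have hTle : ∀ c ∈ insert (iL F C₁ - 1) ((hitSet F C₂).image (fun l => l - 1)),
      c ≤ n := by
    intro c hc
    rcases Finset.mem_insert.mp hc with rfl | hc'
    · have := Setup.hit_le s₁.himem
      omega
    · rw [Finset.mem_image] at hc'
      obtain ⟨u, hu, rfl⟩ := hc'
      have := Setup.hit_le hu
      omega
  have hbound := chainBound hF a
    (insert (iL F C₁ - 1) ((hitSet F C₂).image (fun l => l - 1))) (gA F C₂)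
    (by
      intro c hc
      rcases Finset.mem_insert.mp hc with rfl | hc'
      · refine ⟨lev C₁ (iL F C₁), Setup.hit_F s₁.himem, ?_⟩
        rw [Finset.erase_eq, ← ha₁, ← alpha_key s₁ _ le_rfl (Setup.hit_le s₁.himem),
          he _ (by have := Setup.hit_le s₁.himem; omega)]
      · rw [Finset.mem_image] at hc'
        obtain ⟨u, hu, rfl⟩ := hc'
        refine ⟨lev C₂ u, Setup.hit_F hu, ?_⟩
        rw [Finset.erase_eq, ← ha₂, ← alpha_key s₂ _ (s₂.hiLe _ hu) (Setup.hit_le hu)])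
    (fun c hc => (gradA s₂).hcard _ (hTle c hc))
    (fun u hu v hv huv => (gradA s₂).hmono _ _ huv (hTle v hv))
  have hnm : iL F C₁ - 1 ∉ (hitSet F C₂).image (fun l => l - 1) := by
    intro hmem
    rw [Finset.mem_image] at hmem
    obtain ⟨u, hu, huv⟩ := hmem
    have h1 := s₂.hiLe _ hu
    omega
  have hinj : Set.InjOn (fun l => l - 1) ↑(hitSet F C₂) := by
    intro u hu v hv huv
    have h1 := s₂.hiLe _ (Finset.mem_coe.mp hu)
    have h2 := s₂.hiLe _ (Finset.mem_coe.mp hv)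
    simp only at huv
    have := s₂.hi4
    omega
  rw [Finset.card_insert_of_notMem hnm, Finset.card_image_of_injOn hinj, hcH] at hbound
  have := s₁.hk2
  omega

lemma injAA {k : ℕ} {F : Finset (Finset (Fin n))} {C₁ C₂ : Finset (Finset (Fin n))}
    (hF : ∀ x : Fin n, IsKSperner k (F.image (fun A => A.erase x)))
    (s₁ : Setup F k C₁) (s₂ : Setup F k C₂)
    (he : ∀ j, j ≤ n → gA F C₁ j = gA F C₂ j) : C₁ = C₂ := by
  classical
  obtain ⟨a₁, y₁, ha₁, hy₁, han₁, hyn₁, hay₁⟩ := setup_extra s₁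
  obtain ⟨a₂, y₂, ha₂, hy₂, han₂, hyn₂, hay₂⟩ := setup_extra s₂
  have hn6 := s₁.hn6
  have haa : a₁ = a₂ := by
    apply sdiff_univ_eq (n := n)
    rw [← ha₁, ← ha₂, ← alpha_top s₁, ← alpha_top s₂]
    exact he _ (by omega)
  subst haa
  have hii : iL F C₁ = iL F C₂ := by
    rcases Nat.lt_trichotomy (iL F C₁) (iL F C₂) with h | h | h
    · exact absurd (injA_lt hF s₁ s₂ ha₁ ha₂ he h) (fun x => x)
    · exact h
    · exact absurd (injA_lt hF s₂ s₁ ha₂ ha₁ (fun j hj => (he j hj).symm) h) (fun x => x)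
  have key : ∀ (C' : Finset (Finset (Fin n))) (s' : Setup F k C'),
      Ad F C' = {a₁} → ∀ j, j ≤ n → iL F C' ≤ j →
      lev C' j = insert a₁ (gA F C' (j - 1)) := by
    intro C' s' ha' j hj hij
    obtain ⟨a', y', ha'', hy', han', hyn', hay'⟩ := setup_extra s'
    have haa' : a' = a₁ := by
      rw [ha'] at ha''
      exact (Finset.singleton_inj.mp ha'').symm
    subst haa'
    rw [alpha_key s' j hij hj, ha', ← Finset.erase_eq,
      Finset.insert_erase ((han' j hj).mpr hij)]
  have hlev : ∀ j, j ≤ n → lev C₁ j = lev C₂ j := by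
    intro j hj
    rcases Nat.lt_or_ge j (iL F C₁) with h | h
    · have e1 : lev C₁ j = gA F C₁ j := by rw [gA, if_pos h]
      have e2 : lev C₂ j = gA F C₂ j := by rw [gA, if_pos (by omega)]
      rw [e1, e2, he j hj]
    · rw [key C₁ s₁ ha₁ j hj h, key C₂ s₂ ha₂ j hj (by omega), he _ (by omega)]
  rw [s₁.ceq, s₂.ceq]
  apply Finset.image_congr
  intro j hj
  simp only [Finset.coe_range, Set.mem_Iio] at hj
  exact hlev j (by omega)

lemma rho_y_g {k : ℕ} {F : Finset (Finset (Fin n))} {C : Finset (Finset (Fin n))}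
    (s : Setup F k C) {a y : Fin n} (ha : Ad F C = {a}) (hy : Yd F C = {y})
    (han : ∀ l, l ≤ n → (a ∈ lev C l ↔ iL F C ≤ l))
    (hyn : ∀ l, l ≤ n → (y ∈ lev C l ↔ mL F C + 1 ≤ l))
    (hay : a ≠ y) :
    (∀ c, 1 ≤ c → c ≤ n → y ∈ gR F C c) ∧ (∀ c, c ≤ n - 1 → a ∉ gR F C c) := by
  have hi4 := s.hi4
  have him := s.him
  have hmn := s.hmn
  have hn6 := s.hn6
  constructor
  · intro c h1 h2
    rw [gR]
    split_ifs with b0 b1 b2 b3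
    · omega
    · exact Finset.mem_union_right _ (hy ▸ Finset.mem_singleton_self y)
    · exact Finset.mem_union_right _ (hy ▸ Finset.mem_singleton_self y)
    · rw [ha, Finset.mem_sdiff, Finset.mem_singleton]
      exact ⟨(hyn _ (by omega)).mpr (by omega), fun hc => hay hc.symm⟩
    · exact Finset.mem_univ _
  · intro c h1 hmem
    rw [gR] at hmem
    split_ifs at hmem with b0 b1 b2 b3
    · exact Finset.notMem_empty _ hmem
    · rcases Finset.mem_union.mp hmem with h | h
      · have := (han _ (by omega)).mp h
        omega
      · rw [hy, Finset.mem_singleton] at h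
        exact hay h
    · rcases Finset.mem_union.mp hmem with h | h
      · rw [ha, Finset.mem_sdiff, Finset.mem_singleton] at h
        exact h.2 rfl
      · rw [hy, Finset.mem_singleton] at h
        exact hay h
    · rw [ha, Finset.mem_sdiff, Finset.mem_singleton] at hmem
      exact hmem.2 rfl

lemma rho_key_erase {k : ℕ} {F : Finset (Finset (Fin n))} {C : Finset (Finset (Fin n))}
    (s : Setup F k C) {a y : Fin n} (ha : Ad F C = {a}) (hy : Yd F C = {y})
    (hyn : ∀ l, l ≤ n → (y ∈ lev C l ↔ mL F C + 1 ≤ l)) :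
    ∀ l, iL F C ≤ l → l ≤ mL F C → (gR F C l).erase y = lev C l \ {a} := by
  intro l h1 h2
  have hmn := s.hmn
  rw [rho_key s l h1 h2, ha, hy]
  exact erase_union_singleton (fun hmem => by
    have := (hyn _ (by omega)).mp (Finset.mem_sdiff.mp hmem).1
    omega)

lemma rho_lev_eq {k : ℕ} {F : Finset (Finset (Fin n))} {C : Finset (Finset (Fin n))}
    (s : Setup F k C) {a y : Fin n} (ha : Ad F C = {a}) (hy : Yd F C = {y})
    (han : ∀ l, l ≤ n → (a ∈ lev C l ↔ iL F C ≤ l))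
    (hyn : ∀ l, l ≤ n → (y ∈ lev C l ↔ mL F C + 1 ≤ l)) :
    ∀ l, iL F C ≤ l → l ≤ mL F C → lev C l = insert a ((gR F C l).erase y) := by
  intro l h1 h2
  have hmn := s.hmn
  rw [rho_key_erase s ha hy hyn l h1 h2, ← Finset.erase_eq,
    Finset.insert_erase ((han l (by omega)).mpr h1)]

lemma injR_aux1 {k : ℕ} {F : Finset (Finset (Fin n))} {C₁ C₂ : Finset (Finset (Fin n))}
    (hF : ∀ x : Fin n, IsKSperner k (F.image (fun A => A.erase x)))
    (s₁ : Setup F k C₁) (s₂ : Setup F k C₂)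
    (hQ₁ : caseQ F C₁) (hQ₂ : caseQ F C₂) {a y : Fin n}
    (ha₁ : Ad F C₁ = {a}) (ha₂ : Ad F C₂ = {a})
    (hy₁ : Yd F C₁ = {y}) (hy₂ : Yd F C₂ = {y})
    (han₁ : ∀ l, l ≤ n → (a ∈ lev C₁ l ↔ iL F C₁ ≤ l))
    (hyn₁ : ∀ l, l ≤ n → (y ∈ lev C₁ l ↔ mL F C₁ + 1 ≤ l))
    (han₂ : ∀ l, l ≤ n → (a ∈ lev C₂ l ↔ iL F C₂ ≤ l))
    (hyn₂ : ∀ l, l ≤ n → (y ∈ lev C₂ l ↔ mL F C₂ + 1 ≤ l))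
    (hay : a ≠ y)
    (he : ∀ j, j ≤ n → gR F C₁ j = gR F C₂ j)
    (hml : mL F C₁ ≤ mL F C₂) :
    (hitSet F C₁).erase (iL F C₁) = (hitSet F C₂).erase (iL F C₂) := by
  classical
  obtain ⟨hyg₂, hag₂⟩ := rho_y_g s₂ ha₂ hy₂ han₂ hyn₂ hay
  have hk2 := s₁.hk2
  have hi41 := s₁.hi4
  have hi42 := s₂.hi4
  have hm1 := s₁.hmn
  have hm2 := s₂.hmn
  have him₁ := s₁.him
  have him₂ := s₂.him
  set U₁ := (hitSet F C₁).erase (iL F C₁) with hU₁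
  set U₂ := (hitSet F C₂).erase (iL F C₂) with hU₂
  have hU₁le : ∀ l ∈ U₁, iL F C₁ < l ∧ l ≤ mL F C₁ := by
    intro l hl
    rw [hU₁, Finset.mem_erase] at hl
    have h1 := s₁.hiLe _ hl.2
    have h2 := s₁.hmGe _ hl.2
    exact ⟨by omega, h2⟩
  have hU₂le : ∀ l ∈ U₂, iL F C₂ < l ∧ l ≤ mL F C₂ := by
    intro l hl
    rw [hU₂, Finset.mem_erase] at hl
    have h1 := s₂.hiLe _ hl.2
    have h2 := s₂.hmGe _ hl.2
    exact ⟨by omega, h2⟩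
  have hUb : ∀ l ∈ U₁ ∪ U₂, 5 ≤ l ∧ l ≤ mL F C₂ := by
    intro l hl
    rcases Finset.mem_union.mp hl with h | h
    · have := hU₁le _ h
      omega
    · have := hU₂le _ h
      omega
  let f : ℕ → Finset (Fin n) := fun c =>
    if c < mL F C₂ then (gR F C₂ (c+1)).erase y
    else insert a ((gR F C₂ (mL F C₂)).erase y)
  have hfm : f (mL F C₂) = insert a ((gR F C₂ (mL F C₂)).erase y) := if_neg (lt_irrefl _)
  have hfl : ∀ c, c < mL F C₂ → f c = (gR F C₂ (c+1)).erase y := fun c hc => if_pos hc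
  have hbound := chainBound hF y
    (insert (mL F C₂) ((U₁ ∪ U₂).image (fun l => l - 1))) f
    (by
      intro c hc
      rcases Finset.mem_insert.mp hc with rfl | hc'
      · rw [hfm]
        refine ⟨lev C₂ (mL F C₂), Setup.hit_F s₂.hmmem, ?_⟩
        rw [Finset.erase_eq_of_notMem (fun hmem => by
          have := (hyn₂ _ (by omega)).mp hmem; omega)]
        exact rho_lev_eq s₂ ha₂ hy₂ han₂ hyn₂ _ (le_of_lt s₂.him) le_rfl
      · rw [Finset.mem_image] at hc'
        obtain ⟨u, hu, rfl⟩ := hc'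
        have hub := hUb _ hu
        rw [hfl _ (by omega)]
        have hu1 : u - 1 + 1 = u := by omega
        rw [hu1]
        rcases Finset.mem_union.mp hu with h | h
        · have h1 := hU₁le _ h
          rw [hU₁, Finset.mem_erase] at h
          have hmemF : lev C₁ u \ {a} ∈ F := by
            have := hQ₁ u h.2 h.1
            rwa [ha₁] at this
          refine ⟨lev C₁ u \ {a}, hmemF, ?_⟩
          rw [Finset.erase_eq_of_notMem (fun hmem => by
            have := (hyn₁ _ (by omega)).mp (Finset.mem_sdiff.mp hmem).1
            omega)]
          rw [← he u (by omega)]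
          exact (rho_key_erase s₁ ha₁ hy₁ hyn₁ u (by omega) h1.2).symm
        · have h1 := hU₂le _ h
          rw [hU₂, Finset.mem_erase] at h
          have hmemF : lev C₂ u \ {a} ∈ F := by
            have := hQ₂ u h.2 h.1
            rwa [ha₂] at this
          refine ⟨lev C₂ u \ {a}, hmemF, ?_⟩
          rw [Finset.erase_eq_of_notMem (fun hmem => by
            have := (hyn₂ _ (by omega)).mp (Finset.mem_sdiff.mp hmem).1
            omega)]
          exact (rho_key_erase s₂ ha₂ hy₂ hyn₂ u (by omega) h1.2).symm)
    (by
      intro c hc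
      rcases Finset.mem_insert.mp hc with rfl | hc'
      · rw [hfm, Finset.card_insert_of_notMem (fun hmem =>
          hag₂ _ (by omega) (Finset.erase_subset _ _ hmem)),
          Finset.card_erase_of_mem (hyg₂ _ (by omega) (by omega)),
          (gradR s₂).hcard _ (by omega)]
        omega
      · rw [Finset.mem_image] at hc'
        obtain ⟨u, hu, rfl⟩ := hc'
        have hub := hUb _ hu
        rw [hfl _ (by omega)]
        have hu1 : u - 1 + 1 = u := by omega
        rw [hu1, Finset.card_erase_of_mem (hyg₂ _ (by omega) (by omega)),
          (gradR s₂).hcard _ (by omega)])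
    (by
      intro u hu v hv huv
      have hub : u ≤ mL F C₂ := by
        rcases Finset.mem_insert.mp hu with rfl | hu'
        · exact le_rfl
        · rw [Finset.mem_image] at hu'
          obtain ⟨w, hw, rfl⟩ := hu'
          have := hUb _ hw
          omega
      have hvb : v ≤ mL F C₂ := by
        rcases Finset.mem_insert.mp hv with rfl | hv'
        · exact le_rfl
        · rw [Finset.mem_image] at hv'
          obtain ⟨w, hw, rfl⟩ := hv'
          have := hUb _ hw
          omega
      rcases Nat.lt_or_ge v (mL F C₂) with h | h
      · have hu' : u < mL F C₂ := by omega
        rw [hfl _ hu', hfl _ h]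
        exact Finset.erase_subset_erase _ ((gradR s₂).hmono _ _ (by omega) (by omega))
      · have hvm : v = mL F C₂ := by omega
        subst hvm
        rw [hfm]
        rcases Nat.lt_or_ge u (mL F C₂) with h' | h'
        · rw [hfl _ h']
          refine Finset.Subset.trans ?_ (Finset.subset_insert _ _)
          exact Finset.erase_subset_erase _ ((gradR s₂).hmono _ _ (by omega) (by omega))
        · have hum : u = mL F C₂ := by omega
          subst hum
          rw [hfm])
  have hnm : mL F C₂ ∉ (U₁ ∪ U₂).image (fun l => l - 1) := by
    intro hmem
    rw [Finset.mem_image] at hmem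
    obtain ⟨u, hu, huv⟩ := hmem
    have := hUb _ hu
    omega
  have hinj : Set.InjOn (fun l => l - 1) ↑(U₁ ∪ U₂) := by
    intro u hu v hv huv
    have h1 := hUb _ (Finset.mem_coe.mp hu)
    have h2 := hUb _ (Finset.mem_coe.mp hv)
    simp only at huv
    omega
  rw [Finset.card_insert_of_notMem hnm, Finset.card_image_of_injOn hinj] at hbound
  have hcU₁ : U₁.card = k - 1 := by
    rw [hU₁, Finset.card_erase_of_mem s₁.himem, s₁.hcardH]
  have hcU₂ : U₂.card = k - 1 := by
    rw [hU₂, Finset.card_erase_of_mem s₂.himem, s₂.hcardH]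
  have hUU : U₁ = U₁ ∪ U₂ := by
    apply Finset.eq_of_subset_of_card_le Finset.subset_union_left
    omega
  have hsub : U₂ ⊆ U₁ := by
    rw [hUU]
    exact Finset.subset_union_right
  exact (Finset.eq_of_subset_of_card_le hsub (by omega)).symm

lemma injRR {k : ℕ} {F : Finset (Finset (Fin n))} {C₁ C₂ : Finset (Finset (Fin n))}
    (hF : ∀ x : Fin n, IsKSperner k (F.image (fun A => A.erase x)))
    (s₁ : Setup F k C₁) (s₂ : Setup F k C₂)
    (hQ₁ : caseQ F C₁) (hQ₂ : caseQ F C₂)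
    (he : ∀ j, j ≤ n → gR F C₁ j = gR F C₂ j) : C₁ = C₂ := by
  classical
  obtain ⟨a₁, y₁, ha₁, hy₁, han₁, hyn₁, hay₁⟩ := setup_extra s₁
  obtain ⟨a₂, y₂, ha₂, hy₂, han₂, hyn₂, hay₂⟩ := setup_extra s₂
  have hn6 := s₁.hn6
  have hk2 := s₁.hk2
  have hi41 := s₁.hi4
  have hi42 := s₂.hi4
  have him₁ := s₁.him
  have him₂ := s₂.him
  have hm1 := s₁.hmn
  have hm2 := s₂.hmn
  have hyy : y₁ = y₂ := by
    have h := he 1 (by omega)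
    rw [rho_one s₁, rho_one s₂, hy₁, hy₂] at h
    exact Finset.singleton_inj.mp h
  subst hyy
  have haa : a₁ = a₂ := by
    apply sdiff_univ_eq (n := n)
    rw [← ha₁, ← ha₂, ← rho_top s₁, ← rho_top s₂]
    exact he _ (by omega)
  subst haa
  obtain ⟨hyg₂, hag₂⟩ := rho_y_g s₂ ha₂ hy₂ han₂ hyn₂ hay₁
  have hU : (hitSet F C₁).erase (iL F C₁) = (hitSet F C₂).erase (iL F C₂) := by
    rcases le_total (mL F C₁) (mL F C₂) with h | h
    · exact injR_aux1 hF s₁ s₂ hQ₁ hQ₂ ha₁ ha₂ hy₁ hy₂ han₁ hyn₁ han₂ hyn₂ hay₁ he h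
    · exact (injR_aux1 hF s₂ s₁ hQ₂ hQ₁ ha₂ ha₁ hy₂ hy₁ han₂ hyn₂ han₁ hyn₁ hay₁
        (fun j hj => (he j hj).symm) h).symm
  have hmm : mL F C₁ = mL F C₂ := by
    have h1 : mL F C₁ ∈ (hitSet F C₂).erase (iL F C₂) := by
      rw [← hU]
      exact Finset.mem_erase.mpr ⟨by omega, s₁.hmmem⟩
    have h2 : mL F C₂ ∈ (hitSet F C₁).erase (iL F C₁) := by
      rw [hU]
      exact Finset.mem_erase.mpr ⟨by omega, s₂.hmmem⟩
    have h3 := s₂.hmGe _ (Finset.mem_erase.mp h1).2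
    have h4 := s₁.hmGe _ (Finset.mem_erase.mp h2).2
    omega
  have hii : iL F C₁ = iL F C₂ := by
    by_contra hne
    have hU₂le : ∀ l ∈ (hitSet F C₁).erase (iL F C₁),
        iL F C₂ < l ∧ l ≤ mL F C₂ ∧ l ∈ (hitSet F C₂).erase (iL F C₂) := by
      intro l hl
      have hl₂ : l ∈ (hitSet F C₂).erase (iL F C₂) := hU ▸ hl
      rw [Finset.mem_erase] at hl₂
      have b1 := s₂.hiLe _ hl₂.2
      have b2 := s₂.hmGe _ hl₂.2
      exact ⟨by omega, b2, hU ▸ hl⟩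
    have hTb : ∀ c ∈ insert (iL F C₁ - 1) (insert (iL F C₂ - 1)
        (((hitSet F C₁).erase (iL F C₁)).image (fun l => l - 1))),
        3 ≤ c ∧ c + 1 ≤ mL F C₂ := by
      intro c hc
      rcases Finset.mem_insert.mp hc with rfl | hc
      · exact ⟨by omega, by omega⟩
      · rcases Finset.mem_insert.mp hc with rfl | hc
        · exact ⟨by omega, by omega⟩
        · rw [Finset.mem_image] at hc
          obtain ⟨u, hu, rfl⟩ := hc
          have := hU₂le _ hu
          omega
    have hbound := chainBound hF a₁
      (insert (iL F C₁ - 1) (insert (iL F C₂ - 1)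
        (((hitSet F C₁).erase (iL F C₁)).image (fun l => l - 1))))
      (fun c => (gR F C₂ (c+1)).erase y₁)
      (by
        intro c hc
        rcases Finset.mem_insert.mp hc with rfl | hc
        · refine ⟨lev C₁ (iL F C₁), Setup.hit_F s₁.himem, ?_⟩
          show (lev C₁ (iL F C₁)).erase a₁ = (gR F C₂ (iL F C₁ - 1 + 1)).erase y₁
          have h1 : iL F C₁ - 1 + 1 = iL F C₁ := by omega
          rw [h1, ← he _ (by omega), rho_key_erase s₁ ha₁ hy₁ hyn₁ _ le_rfl (by omega),
            Finset.erase_eq]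
        · rcases Finset.mem_insert.mp hc with rfl | hc
          · refine ⟨lev C₂ (iL F C₂), Setup.hit_F s₂.himem, ?_⟩
            show (lev C₂ (iL F C₂)).erase a₁ = (gR F C₂ (iL F C₂ - 1 + 1)).erase y₁
            have h1 : iL F C₂ - 1 + 1 = iL F C₂ := by omega
            rw [h1, rho_key_erase s₂ ha₂ hy₂ hyn₂ _ le_rfl (by omega), Finset.erase_eq]
          · rw [Finset.mem_image] at hc
            obtain ⟨u, hu, rfl⟩ := hc
            obtain ⟨b1, b2, hu₂⟩ := hU₂le _ hu
            rw [Finset.mem_erase] at hu₂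
            have hmemF : lev C₂ u \ {a₁} ∈ F := by
              have := hQ₂ u hu₂.2 hu₂.1
              rwa [ha₂] at this
            refine ⟨lev C₂ u \ {a₁}, hmemF, ?_⟩
            show (lev C₂ u \ {a₁}).erase a₁ = (gR F C₂ (u - 1 + 1)).erase y₁
            have h1 : u - 1 + 1 = u := by omega
            rw [h1, rho_key_erase s₂ ha₂ hy₂ hyn₂ _ (by omega) b2, erase_of_sdiff])
      (by
        intro c hc
        obtain ⟨b1, b2⟩ := hTb _ hc
        show ((gR F C₂ (c+1)).erase y₁).card = c
        rw [Finset.card_erase_of_mem (hyg₂ _ (by omega) (by omega)),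
          (gradR s₂).hcard _ (by omega)]
        omega)
      (by
        intro u hu v hv huv
        obtain ⟨b1, b2⟩ := hTb _ hv
        exact Finset.erase_subset_erase _ ((gradR s₂).hmono _ _ (by omega) (by omega)))
    have hn1 : iL F C₂ - 1 ∉
        (((hitSet F C₁).erase (iL F C₁)).image (fun l => l - 1)) := by
      intro hmem
      rw [Finset.mem_image] at hmem
      obtain ⟨u, hu, huv⟩ := hmem
      obtain ⟨b1, b2, hu₂⟩ := hU₂le _ hu
      omega
    have hn2 : iL F C₁ - 1 ∉ insert (iL F C₂ - 1)
        (((hitSet F C₁).erase (iL F C₁)).image (fun l => l - 1)) := by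
      intro hmem
      rcases Finset.mem_insert.mp hmem with h | h
      · omega
      · rw [Finset.mem_image] at h
        obtain ⟨u, hu, huv⟩ := h
        rw [Finset.mem_erase] at hu
        have := s₁.hiLe _ hu.2
        have hune : u ≠ iL F C₁ := hu.1
        omega
    have hinj : Set.InjOn (fun l => l - 1) ↑((hitSet F C₁).erase (iL F C₁)) := by
      intro u hu v hv huv
      have h1 := hU₂le _ (Finset.mem_coe.mp hu)
      have h2 := hU₂le _ (Finset.mem_coe.mp hv)
      simp only at huv
      omega
    rw [Finset.card_insert_of_notMem hn2, Finset.card_insert_of_notMem hn1,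
      Finset.card_image_of_injOn hinj, Finset.card_erase_of_mem s₁.himem,
      s₁.hcardH] at hbound
    omega
  -- reconstruction
  have hz2 : ∀ j, iL F C₁ ≤ j → j ≤ mL F C₁ → lev C₁ j = lev C₂ j := by
    intro j h1 h2
    rw [rho_lev_eq s₁ ha₁ hy₁ han₁ hyn₁ j h1 h2,
      rho_lev_eq s₂ ha₂ hy₂ han₂ hyn₂ j (by omega) (by omega), he j (by omega)]
  have hlev : ∀ j, j ≤ n → lev C₁ j = lev C₂ j := by
    intro j hj
    rcases Nat.lt_or_ge j (iL F C₁) with h | h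
    · have e1 : lev C₁ j = (gR F C₁ (j+1)).erase y₁ := by
        rw [gR, if_neg (by omega), if_pos (by omega), hy₁]
        simp only [Nat.add_sub_cancel]
        rw [erase_union_singleton (fun hmem => by
          have := (hyn₁ _ (by omega)).mp hmem
          omega)]
      have e2 : lev C₂ j = (gR F C₂ (j+1)).erase y₁ := by
        rw [gR, if_neg (by omega), if_pos (by omega), hy₂]
        simp only [Nat.add_sub_cancel]
        rw [erase_union_singleton (fun hmem => by
          have := (hyn₂ _ (by omega)).mp hmem
          omega)]
      rw [e1, e2, he _ (by omega)]
    · rcases le_or_gt j (mL F C₁) with h2 | h2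
      · exact hz2 j h h2
      · rcases Nat.eq_or_lt_of_le h2 with h3 | h3
        · have e1 : lev C₁ j = lev C₁ (mL F C₁) ∪ {y₁} := by
            have : j = mL F C₁ + 1 := by omega
            rw [this, s₁.lev_succ, hy₁]
          have e2 : lev C₂ j = lev C₂ (mL F C₂) ∪ {y₁} := by
            have : j = mL F C₂ + 1 := by omega
            rw [this, s₂.lev_succ, hy₂]
          rw [e1, e2, ← hmm, hz2 _ (by omega) le_rfl]
        · have e1 : lev C₁ j = insert a₁ (gR F C₁ (j-1)) := by
            rw [gR, if_neg (by omega), if_neg (by omega), if_neg (by omega),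
              if_pos (by omega), ha₁]
            have hj1 : j - 1 + 1 = j := by omega
            rw [hj1, ← Finset.erase_eq,
              Finset.insert_erase ((han₁ _ (by omega)).mpr (by omega))]
          have e2 : lev C₂ j = insert a₁ (gR F C₂ (j-1)) := by
            rw [gR, if_neg (by omega), if_neg (by omega), if_neg (by omega),
              if_pos (by omega), ha₂]
            have hj1 : j - 1 + 1 = j := by omega
            rw [hj1, ← Finset.erase_eq,
              Finset.insert_erase ((han₂ _ (by omega)).mpr (by omega))]
          rw [e1, e2, he _ (by omega)]
  rw [s₁.ceq, s₂.ceq]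
  apply Finset.image_congr
  intro j hj
  simp only [Finset.coe_range, Set.mem_Iio] at hj
  exact hlev j (by omega)

lemma injAR {k : ℕ} {F : Finset (Finset (Fin n))} {C₁ C₂ : Finset (Finset (Fin n))}
    (hF : ∀ x : Fin n, IsKSperner k (F.image (fun A => A.erase x)))
    (s₁ : Setup F k C₁) (s₂ : Setup F k C₂) (hQ₂ : caseQ F C₂)
    (he : ∀ j, j ≤ n → gA F C₁ j = gR F C₂ j) : False := by
  classical
  obtain ⟨a₁, y₁, ha₁, hy₁, han₁, hyn₁, hay₁⟩ := setup_extra s₁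
  obtain ⟨a₂, y₂, ha₂, hy₂, han₂, hyn₂, hay₂⟩ := setup_extra s₂
  have hn6 := s₁.hn6
  have hk2 := s₁.hk2
  have hi41 := s₁.hi4
  have hi42 := s₂.hi4
  have him₁ := s₁.him
  have him₂ := s₂.him
  have hm1 := s₁.hmn
  have hm2 := s₂.hmn
  have haa : a₁ = a₂ := by
    apply sdiff_univ_eq (n := n)
    rw [← ha₁, ← ha₂, ← alpha_top s₁, ← rho_top s₂]
    exact he _ (by omega)
  subst haa
  obtain ⟨hyg₂, hag₂⟩ := rho_y_g s₂ ha₂ hy₂ han₂ hyn₂ hay₂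
  have hαr : ∀ l ∈ hitSet F C₁, lev C₁ l = insert a₁ (gR F C₂ (l - 1)) := by
    intro l hl
    have h1 := s₁.hiLe _ hl
    have h2 := Setup.hit_le hl
    rw [← he (l-1) (by omega), alpha_key s₁ l h1 h2, ha₁, ← Finset.erase_eq,
      Finset.insert_erase ((han₁ _ h2).mpr h1)]
  rcases lt_or_ge (mL F C₂) (mL F C₁) with hM | hM
  · -- branch b : top of C₁'s hits is above everything of C₂
    have hH₂b : ∀ l ∈ hitSet F C₂, iL F C₂ ≤ l ∧ l ≤ mL F C₂ ∧ l ≤ n :=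
      fun l hl => ⟨s₂.hiLe _ hl, s₂.hmGe _ hl, Setup.hit_le hl⟩
    let f : ℕ → Finset (Fin n) := fun c =>
      if c < mL F C₁ - 1 then (gR F C₂ (c+1)).erase y₂ else gR F C₂ (mL F C₁ - 1)
    have hfm : f (mL F C₁ - 1) = gR F C₂ (mL F C₁ - 1) := if_neg (lt_irrefl _)
    have hfl : ∀ c, c < mL F C₁ - 1 → f c = (gR F C₂ (c+1)).erase y₂ :=
      fun c hc => if_pos hc
    have hbound := chainBound hF a₁
      (insert (mL F C₁ - 1) ((hitSet F C₂).image (fun l => l - 1))) f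
      (by
        intro c hc
        rcases Finset.mem_insert.mp hc with rfl | hc
        · rw [hfm]
          refine ⟨lev C₁ (mL F C₁), Setup.hit_F s₁.hmmem, ?_⟩
          rw [Finset.erase_eq, ← ha₁,
            ← alpha_key s₁ _ (s₁.hiLe _ s₁.hmmem) (Setup.hit_le s₁.hmmem),
            he _ (by omega)]
        · rw [Finset.mem_image] at hc
          obtain ⟨u, hu, rfl⟩ := hc
          obtain ⟨b1, b2, b3⟩ := hH₂b _ hu
          rw [hfl _ (by omega)]
          have hu1 : u - 1 + 1 = u := by omega
          rw [hu1]
          rcases eq_or_ne u (iL F C₂) with heq | hne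
          · refine ⟨lev C₂ u, Setup.hit_F hu, ?_⟩
            rw [rho_key_erase s₂ ha₂ hy₂ hyn₂ _ (le_of_eq heq.symm) b2, Finset.erase_eq]
          · have hmemF : lev C₂ u \ {a₁} ∈ F := by
              have := hQ₂ u hu hne
              rwa [ha₂] at this
            refine ⟨lev C₂ u \ {a₁}, hmemF, ?_⟩
            rw [rho_key_erase s₂ ha₂ hy₂ hyn₂ _ (by omega) b2, erase_of_sdiff])
      (by
        intro c hc
        rcases Finset.mem_insert.mp hc with rfl | hc
        · rw [hfm]
          exact (gradR s₂).hcard _ (by omega)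
        · rw [Finset.mem_image] at hc
          obtain ⟨u, hu, rfl⟩ := hc
          obtain ⟨b1, b2, b3⟩ := hH₂b _ hu
          rw [hfl _ (by omega)]
          have hu1 : u - 1 + 1 = u := by omega
          rw [hu1, Finset.card_erase_of_mem (hyg₂ _ (by omega) (by omega)),
            (gradR s₂).hcard _ (by omega)])
      (by
        intro u hu v hv huv
        have hub : u ≤ mL F C₁ - 1 := by
          rcases Finset.mem_insert.mp hu with rfl | hu'
          · exact le_rfl
          · rw [Finset.mem_image] at hu'
            obtain ⟨w, hw, rfl⟩ := hu'
            have := hH₂b _ hw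
            omega
        have hvb : v ≤ mL F C₁ - 1 := by
          rcases Finset.mem_insert.mp hv with rfl | hv'
          · exact le_rfl
          · rw [Finset.mem_image] at hv'
            obtain ⟨w, hw, rfl⟩ := hv'
            have := hH₂b _ hw
            omega
        rcases Nat.lt_or_ge v (mL F C₁ - 1) with h | h
        · rw [hfl _ (by omega), hfl _ h]
          exact Finset.erase_subset_erase _ ((gradR s₂).hmono _ _ (by omega) (by omega))
        · have hvm : v = mL F C₁ - 1 := by omega
          subst hvm
          rw [hfm]
          rcases Nat.lt_or_ge u (mL F C₁ - 1) with h' | h'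
          · rw [hfl _ h']
            exact Finset.Subset.trans (Finset.erase_subset _ _)
              ((gradR s₂).hmono _ _ (by omega) (by omega))
          · have hum : u = mL F C₁ - 1 := by omega
            subst hum
            rw [hfm])
    have hnm : mL F C₁ - 1 ∉ (hitSet F C₂).image (fun l => l - 1) := by
      intro hmem
      rw [Finset.mem_image] at hmem
      obtain ⟨u, hu, huv⟩ := hmem
      have := hH₂b _ hu
      omega
    have hinj : Set.InjOn (fun l => l - 1) ↑(hitSet F C₂) := by
      intro u hu v hv huv
      have h1 := hH₂b _ (Finset.mem_coe.mp hu)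
      have h2 := hH₂b _ (Finset.mem_coe.mp hv)
      simp only at huv
      omega
    rw [Finset.card_insert_of_notMem hnm, Finset.card_image_of_injOn hinj,
      s₂.hcardH] at hbound
    omega
  · -- branch a : C₂'s top dominates
    have hH₁b : ∀ l ∈ hitSet F C₁, iL F C₁ ≤ l ∧ l ≤ mL F C₁ ∧ l ≤ n :=
      fun l hl => ⟨s₁.hiLe _ hl, s₁.hmGe _ hl, Setup.hit_le hl⟩
    have hbound := chainBound hF y₂
      (insert (mL F C₂) ((hitSet F C₁).image (fun l => l - 1)))
      (fun c => insert a₁ ((gR F C₂ c).erase y₂))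
      (by
        intro c hc
        rcases Finset.mem_insert.mp hc with rfl | hc
        · refine ⟨lev C₂ (mL F C₂), Setup.hit_F s₂.hmmem, ?_⟩
          show (lev C₂ (mL F C₂)).erase y₂ = insert a₁ ((gR F C₂ (mL F C₂)).erase y₂)
          rw [Finset.erase_eq_of_notMem (fun hmem => by
            have := (hyn₂ _ (by omega)).mp hmem
            omega)]
          exact rho_lev_eq s₂ ha₂ hy₂ han₂ hyn₂ _ (le_of_lt him₂) le_rfl
        · rw [Finset.mem_image] at hc
          obtain ⟨u, hu, rfl⟩ := hc
          obtain ⟨b1, b2, b3⟩ := hH₁b _ hu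
          refine ⟨lev C₁ u, Setup.hit_F hu, ?_⟩
          show (lev C₁ u).erase y₂ = insert a₁ ((gR F C₂ (u-1)).erase y₂)
          rw [hαr u hu, Finset.erase_insert_of_ne hay₂])
      (by
        intro c hc
        have hcb : 1 ≤ c ∧ c ≤ n - 1 := by
          rcases Finset.mem_insert.mp hc with rfl | hc
          · omega
          · rw [Finset.mem_image] at hc
            obtain ⟨u, hu, rfl⟩ := hc
            have := hH₁b _ hu
            omega
        show (insert a₁ ((gR F C₂ c).erase y₂)).card = c
        rw [Finset.card_insert_of_notMem (fun hmem =>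
            hag₂ _ (by omega) (Finset.erase_subset _ _ hmem)),
          Finset.card_erase_of_mem (hyg₂ _ (by omega) (by omega)),
          (gradR s₂).hcard _ (by omega)]
        omega)
      (by
        intro u hu v hv huv
        have hvb : v ≤ n - 1 := by
          rcases Finset.mem_insert.mp hv with rfl | hv'
          · omega
          · rw [Finset.mem_image] at hv'
            obtain ⟨w, hw, rfl⟩ := hv'
            have := hH₁b _ hw
            omega
        exact Finset.insert_subset_insert _ (Finset.erase_subset_erase _
          ((gradR s₂).hmono _ _ huv (by omega))))
    have hnm : mL F C₂ ∉ (hitSet F C₁).image (fun l => l - 1) := by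
      intro hmem
      rw [Finset.mem_image] at hmem
      obtain ⟨u, hu, huv⟩ := hmem
      have := hH₁b _ hu
      omega
    have hinj : Set.InjOn (fun l => l - 1) ↑(hitSet F C₁) := by
      intro u hu v hv huv
      have h1 := hH₁b _ (Finset.mem_coe.mp hu)
      have h2 := hH₁b _ (Finset.mem_coe.mp hv)
      simp only at huv
      omega
    rw [Finset.card_insert_of_notMem hnm, Finset.card_image_of_injOn hinj,
      s₁.hcardH] at hbound
    omega

lemma Phi_mem {k : ℕ} {F : Finset (Finset (Fin n))} {C : Finset (Finset (Fin n))}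
    (hF : ∀ x : Fin n, IsKSperner k (F.image (fun A => A.erase x)))
    (hsize : ∀ A ∈ F, 4 ≤ A.card ∧ A.card ≤ n - 1)
    (s : Setup F k C) :
    Phi F C ∈ maxChains n ∧ (F ∩ Phi F C).card < k - 1 := by
  classical
  have hk2 := s.hk2
  by_cases hQ : caseQ F C
  · rw [Phi, if_pos hQ]
    have hg := gradR s
    refine ⟨graded_image_mem hg, ?_⟩
    rw [card_inter_eq F (graded_image_mem hg)]
    have heq : hitSet F ((Finset.range (n+1)).image (gR F C)) =
        (Finset.range (n+1)).filter (fun j => gR F C j ∈ F) := by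
      rw [hitSet]
      apply Finset.filter_congr
      intro j hj
      rw [Finset.mem_range] at hj
      rw [lev_image hg (by omega)]
    rw [heq]
    have := hitR hF hsize s hQ
    omega
  · rw [Phi, if_neg hQ]
    have hg := gradA s
    refine ⟨graded_image_mem hg, ?_⟩
    rw [card_inter_eq F (graded_image_mem hg)]
    have heq : hitSet F ((Finset.range (n+1)).image (gA F C)) =
        (Finset.range (n+1)).filter (fun j => gA F C j ∈ F) := by
      rw [hitSet]
      apply Finset.filter_congr
      intro j hj
      rw [Finset.mem_range] at hj
      rw [lev_image hg (by omega)]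
    rw [heq]
    have := hitA hF hsize s hQ
    omega

end S12

theorem stmt12 (n k : ℕ) (hk : 2 ≤ k) (F : Finset (Finset (Fin n)))
    (hF : ∀ x : Fin n, IsKSperner k (F.image (fun A => A.erase x)))
    (hsize : ∀ A ∈ F, 4 ≤ A.card ∧ A.card ≤ n - 1) :
    ((maxChains n).filter (fun C => (F ∩ C).card = k)).card ≤
      ((maxChains n).filter (fun C => (F ∩ C).card < k - 1)).card := by
  classical
  apply Finset.card_le_card_of_injOn (S12.Phi F)
  · intro C hC
    rw [Finset.mem_coe, Finset.mem_filter] at hC ⊢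
    have s := S12.setup_of F hk hsize hC.1 hC.2
    have h := S12.Phi_mem hF hsize s
    exact ⟨h.1, h.2⟩
  · intro C₁ h₁ C₂ h₂ heq
    rw [Finset.mem_coe, Finset.mem_filter] at h₁ h₂
    have s₁ := S12.setup_of F hk hsize h₁.1 h₁.2
    have s₂ := S12.setup_of F hk hsize h₂.1 h₂.2
    by_cases hQ₁ : S12.caseQ F C₁ <;> by_cases hQ₂ : S12.caseQ F C₂
    · rw [S12.Phi, if_pos hQ₁, S12.Phi, if_pos hQ₂] at heq
      refine S12.injRR hF s₁ s₂ hQ₁ hQ₂ ?_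
      intro j hj
      rw [← S12.lev_image (S12.gradR s₁) hj, ← S12.lev_image (S12.gradR s₂) hj, heq]
    · rw [S12.Phi, if_pos hQ₁, S12.Phi, if_neg hQ₂] at heq
      refine absurd (S12.injAR hF s₂ s₁ hQ₁ ?_) (fun x => x)
      intro j hj
      rw [← S12.lev_image (S12.gradA s₂) hj, ← S12.lev_image (S12.gradR s₁) hj, heq]
    · rw [S12.Phi, if_neg hQ₁, S12.Phi, if_pos hQ₂] at heq
      refine absurd (S12.injAR hF s₁ s₂ hQ₂ ?_) (fun x => x)
      intro j hj
      rw [← S12.lev_image (S12.gradA s₁) hj, ← S12.lev_image (S12.gradR s₂) hj, heq]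
    · rw [S12.Phi, if_neg hQ₁, S12.Phi, if_neg hQ₂] at heq
      refine S12.injAA hF s₁ s₂ ?_
      intro j hj
      rw [← S12.lev_image (S12.gradA s₁) hj, ← S12.lev_image (S12.gradA s₂) hj, heq]
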